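/- Let M be a planar hypermap and l₁ = (x,b) :: (x',b') :: l a list of at least two double-links satisfying the ring continuity condition (consecutive faces adjacent, pre_ring1) and the simplicity condition (all faces distinct, pre_ring3). Let y = α₀(x) and x₀ = bottom of the 0-orbit of x. Then y and x₀ do not lie in the same face of M. -/

import Mathlib

open scoped Classical

/-- Dimensions 0 and 1. -/
inductive Dim : Type
  | zero : Dim
  | one : Dim
deriving DecidableEq

/-- Free maps: empty map, dart insertion, dart linking at a dimension. -/
inductive Fmap : Type
  | V : Fmap
  | I : Fmap → Nat → Fmap
  | L : Fmap → Dim → Nat → Nat → Fmap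

namespace Fmap

/-- The nil (exception) dart. -/
def nil : Nat := 0

/-- A dart exists in the map. -/
def exd : Fmap → Nat → Prop
  | V, _ => False
  | I m0 x, z => z = x ∨ exd m0 z
  | L m0 _ _ _, z => exd m0 z

/-- The (partial) k-successor α_k, with nil for undefined. -/
def A : Fmap → Dim → Nat → Nat
  | V, _, _ => nil
  | I m0 _, k, z => A m0 k z
  | L m0 k0 x y, k, z =>
      if k = k0 then (if z = x then y else A m0 k z) else A m0 k z

/-- The (partial) k-predecessor. -/
def A_1 : Fmap → Dim → Nat → Nat
  | V, _, _ => nil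
  | I m0 _, k, z => A_1 m0 k z
  | L m0 k0 x y, k, z =>
      if k = k0 then (if z = y then x else A_1 m0 k z) else A_1 m0 k z

/-- z has a k-successor. -/
def succd (m : Fmap) (k : Dim) (z : Nat) : Prop := A m k z ≠ nil

/-- z has a k-predecessor. -/
def predd (m : Fmap) (k : Dim) (z : Nat) : Prop := A_1 m k z ≠ nil

/-- Bottom dart of the open k-orbit of z. -/
def bottom : Fmap → Dim → Nat → Nat
  | V, _, _ => nil
  | I m0 x, k, z => if z = x then z else bottom m0 k z
  | L m0 k0 x y, k, z =>
      if k = k0 then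
        (if bottom m0 k z = y then bottom m0 k x else bottom m0 k z)
      else bottom m0 k z

/-- Top dart of the open k-orbit of z. -/
def top : Fmap → Dim → Nat → Nat
  | V, _, _ => nil
  | I m0 x, k, z => if z = x then z else top m0 k z
  | L m0 k0 x y, k, z =>
      if k = k0 then
        (if top m0 k z = x then top m0 k y else top m0 k z)
      else top m0 k z

/-- Closure of A: a permutation of existing darts. -/
def cA : Fmap → Dim → Nat → Nat
  | V, _, _ => nil
  | I m0 x, k, z => if z = x then z else cA m0 k z
  | L m0 k0 x y, k, z =>
      if k = k0 then
        (if z = x then y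
         else if z = top m0 k y then bottom m0 k x
         else cA m0 k z)
      else cA m0 k z

/-- Closure of A_1: the inverse permutation of cA. -/
def cA_1 : Fmap → Dim → Nat → Nat
  | V, _, _ => nil
  | I m0 x, k, z => if z = x then z else cA_1 m0 k z
  | L m0 k0 x y, k, z =>
      if k = k0 then
        (if z = y then x
         else if z = bottom m0 k x then top m0 k y
         else cA_1 m0 k z)
      else cA_1 m0 k z

/-- Precondition for inserting a dart. -/
def prec_I (m : Fmap) (x : Nat) : Prop := x ≠ nil ∧ ¬ exd m x

/-- Precondition for linking two darts at a dimension (keeping orbits open). -/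
def prec_L (m : Fmap) (k : Dim) (x y : Nat) : Prop :=
  exd m x ∧ exd m y ∧ ¬ succd m k x ∧ ¬ predd m k y ∧ cA m k x ≠ y

/-- The hypermap invariant. -/
def inv_hmap : Fmap → Prop
  | V => True
  | I m0 x => inv_hmap m0 ∧ prec_I m0 x
  | L m0 k0 x y => inv_hmap m0 ∧ prec_L m0 k0 x y

/-- The closed face map cF, corresponding to φ = α₁⁻¹ ∘ α₀⁻¹. -/
def cF (m : Fmap) (z : Nat) : Nat := cA_1 m Dim.one (cA_1 m Dim.zero z)

/-- Two darts are in the same face (existence of a cF-path). -/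
def expf (m : Fmap) (z t : Nat) : Prop := exd m z ∧ ∃ n : ℕ, (cF m)^[n] z = t

/-- Two darts are in the same edge (existence of a (cA zero)-path). -/
def expe (m : Fmap) (z t : Nat) : Prop := exd m z ∧ ∃ n : ℕ, (fun w => cA m Dim.zero w)^[n] z = t

/-- Two darts are in the same connected component. -/
def eqc : Fmap → Nat → Nat → Prop
  | V, _, _ => False
  | I m0 x, z, t => (z = x ∧ t = x) ∨ eqc m0 z t
  | L m0 _ x y, z, t =>
      eqc m0 z t ∨ (eqc m0 z x ∧ eqc m0 y t) ∨ (eqc m0 z y ∧ eqc m0 x t)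

/-- Number of darts. -/
def nd : Fmap → ℤ
  | V => 0
  | I m0 _ => nd m0 + 1
  | L m0 _ _ _ => nd m0

/-- Number of vertices. -/
def nv : Fmap → ℤ
  | V => 0
  | I m0 _ => nv m0 + 1
  | L m0 Dim.zero _ _ => nv m0
  | L m0 Dim.one _ _ => nv m0 - 1

/-- Number of edges. -/
def ne : Fmap → ℤ
  | V => 0
  | I m0 _ => ne m0 + 1
  | L m0 Dim.zero _ _ => ne m0 - 1
  | L m0 Dim.one _ _ => ne m0

/-- Number of faces. -/
noncomputable def nf : Fmap → ℤ
  | V => 0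
  | I m0 _ => nf m0 + 1
  | L m0 Dim.zero x y => if expf m0 (cA_1 m0 Dim.one x) y then nf m0 + 1 else nf m0 - 1
  | L m0 Dim.one x y => if expf m0 x (cA m0 Dim.zero y) then nf m0 + 1 else nf m0 - 1

/-- Number of connected components. -/
noncomputable def nc : Fmap → ℤ
  | V => 0
  | I m0 _ => nc m0 + 1
  | L m0 _ x y => if eqc m0 x y then nc m0 else nc m0 - 1

/-- Euler characteristic. -/
noncomputable def ec (m : Fmap) : ℤ := nv m + ne m + nf m - nd m

/-- Genus. -/
noncomputable def genus (m : Fmap) : ℤ := nc m - ec m / 2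

/-- Planarity. -/
def planar (m : Fmap) : Prop := genus m = 0

/-- Breaking the latest forward k-link of x. -/
def B : Fmap → Dim → Nat → Fmap
  | V, _, _ => V
  | I m0 x0, k, x => I (B m0 k x) x0
  | L m0 k0 x0 y0, k, x =>
      if k = k0 ∧ x = x0 then m0 else L (B m0 k x) k0 x0 y0

/-- Breaking all the 0-links of the darts of a list, first one first. -/
def Bl (m : Fmap) : List (Nat × Bool) → Fmap
  | [] => m
  | (x, _) :: l0 => Bl (B m Dim.zero x) l0

/-- The dart representing the face coded by a double-link (x, b). -/
def faceDart (m : Fmap) : Nat × Bool → Nat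
  | (x, b) => if b then A m Dim.zero x else bottom m Dim.zero x

/-- The edge of x is distinct from the edges of the darts of a list. -/
def distinct_edge_list (m : Fmap) (x : Nat) : List (Nat × Bool) → Prop
  | [] => True
  | (x', _) :: l0 => distinct_edge_list m x l0 ∧ ¬ expe m x x'

/-- Ring condition (0): unicity of edges, and each dart 0-linked. -/
def pre_ring0 (m : Fmap) : List (Nat × Bool) → Prop
  | [] => True
  | (x, _) :: l0 => pre_ring0 m l0 ∧ distinct_edge_list m x l0 ∧ succd m Dim.zero x

/-- Adjacency of the faces coded by two double-links. -/
def adjacent_faces (m : Fmap) : Nat × Bool → Nat × Bool → Prop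
  | (x, b), (x', b') =>
      let y := A m Dim.zero x
      let y' := A m Dim.zero x'
      let x0 := bottom m Dim.zero x
      let x'0 := bottom m Dim.zero x'
      if b then (if b' then expf m x0 y' else expf m x0 x'0)
      else (if b' then expf m y y' else expf m y x'0)

/-- Ring condition (1): continuity. -/
def pre_ring1 (m : Fmap) : List (Nat × Bool) → Prop
  | [] => True
  | xb :: l0 =>
      pre_ring1 m l0 ∧
      match l0 with
      | [] => True
      | xb' :: _ => adjacent_faces m xb xb'

/-- Last element of a list of double-links (with default). -/
def lastd : List (Nat × Bool) → Nat × Bool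
  | [] => (nil, true)
  | [a] => a
  | _ :: a :: l0 => lastd (a :: l0)

/-- Ring condition (2): circularity. -/
def pre_ring2 (m : Fmap) : List (Nat × Bool) → Prop
  | [] => True
  | (x, b) :: l0 =>
      match l0 with
      | [] => expf m (A m Dim.zero x) (bottom m Dim.zero x)
      | _ :: _ => adjacent_faces m (lastd l0) (x, b)

/-- The faces coded by two double-links are distinct. -/
def distinct_faces (m : Fmap) (xb xb' : Nat × Bool) : Prop :=
  ¬ expf m (faceDart m xb) (faceDart m xb')

/-- The face of xb is distinct from the faces of a list. -/
def distinct_face_list (m : Fmap) (xb : Nat × Bool) : List (Nat × Bool) → Prop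
  | [] => True
  | xb' :: l0 => distinct_face_list m xb l0 ∧ distinct_faces m xb xb'

/-- Ring condition (3): simplicity. -/
def pre_ring3 (m : Fmap) : List (Nat × Bool) → Prop
  | [] => True
  | xb :: l0 => pre_ring3 m l0 ∧ distinct_face_list m xb l0

/-- A ring of faces. -/
def ring (m : Fmap) (l : List (Nat × Bool)) : Prop :=
  l ≠ [] ∧ pre_ring0 m l ∧ pre_ring1 m l ∧ pre_ring2 m l ∧ pre_ring3 m l

/-! ### Auxiliary lemmas -/

lemma exd_ne_nil (m : Fmap) (h : inv_hmap m) : ∀ z, exd m z → z ≠ nil := by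
  induction m with
  | V => intro z hz; cases hz
  | I m0 x ih =>
    intro z hz
    rcases hz with rfl | hz
    · exact h.2.1
    · exact ih h.1 z hz
  | L m0 k0 x y ih =>
    intro z hz; exact ih h.1 z hz

lemma exd_bottom (m : Fmap) (h : inv_hmap m) (k : Dim) :
    ∀ z, exd m z → exd m (bottom m k z) := by
  induction m with
  | V => intro z hz; cases hz
  | I m0 x ih =>
    intro z hz
    simp only [bottom]
    by_cases hzx : z = x
    · simp [hzx, exd]
    · simp only [hzx, if_false]
      rcases hz with rfl | hz
      · exact absurd rfl hzx
      · exact Or.inr (ih h.1 z hz)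
  | L m0 k0 x y ih =>
    intro z hz
    simp only [bottom, exd] at *
    by_cases hk : k = k0
    · simp only [hk, if_true]
      by_cases hb : bottom m0 k0 z = y
      · simp only [hb, if_true]; exact hk ▸ ih h.1 x h.2.1
      · simp only [hb, if_false]; exact hk ▸ ih h.1 z hz
    · simp only [hk, if_false]; exact ih h.1 z hz

lemma exd_top (m : Fmap) (h : inv_hmap m) (k : Dim) :
    ∀ z, exd m z → exd m (top m k z) := by
  induction m with
  | V => intro z hz; cases hz
  | I m0 x ih =>
    intro z hz
    simp only [top]
    by_cases hzx : z = x
    · simp [hzx, exd]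
    · simp only [hzx, if_false]
      rcases hz with rfl | hz
      · exact absurd rfl hzx
      · exact Or.inr (ih h.1 z hz)
  | L m0 k0 x y ih =>
    intro z hz
    simp only [top, exd] at *
    by_cases hk : k = k0
    · simp only [hk, if_true]
      by_cases hb : top m0 k0 z = x
      · simp only [hb, if_true]; exact hk ▸ ih h.1 y h.2.2.1
      · simp only [hb, if_false]; exact hk ▸ ih h.1 z hz
    · simp only [hk, if_false]; exact ih h.1 z hz

lemma nopred_bottom (m : Fmap) (h : inv_hmap m) (k : Dim) :
    ∀ z, exd m z → ¬ predd m k z → bottom m k z = z := by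
  induction m with
  | V => intro z hz; cases hz
  | I m0 x ih =>
    intro z hz hp
    simp only [bottom]
    by_cases hzx : z = x
    · simp [hzx]
    · simp only [hzx, if_false]
      rcases hz with rfl | hz
      · exact absurd rfl hzx
      · exact ih h.1 z hz (by simpa [predd, A_1] using hp)
  | L m0 k0 x y ih =>
    intro z hz hp
    simp only [exd] at hz
    simp only [predd, A_1] at hp
    simp only [bottom]
    by_cases hk : k = k0
    · simp only [hk, if_true] at hp ⊢
      by_cases hzy : z = y
      · exfalso
        simp only [hzy, if_true] at hp
        exact hp (exd_ne_nil m0 h.1 x h.2.1)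
      · simp only [hzy, if_false] at hp
        have hb := ih h.1 z hz (by simpa [predd] using fun hh => hp (hk ▸ hh))
        rw [hk] at hb
        rw [hb]
        simp [hzy]
    · simp only [hk, if_false] at hp ⊢
      exact ih h.1 z hz hp

lemma nosucc_top (m : Fmap) (h : inv_hmap m) (k : Dim) :
    ∀ z, exd m z → ¬ succd m k z → top m k z = z := by
  induction m with
  | V => intro z hz; cases hz
  | I m0 x ih =>
    intro z hz hp
    simp only [top]
    by_cases hzx : z = x
    · simp [hzx]
    · simp only [hzx, if_false]
      rcases hz with rfl | hz
      · exact absurd rfl hzx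
      · exact ih h.1 z hz (by simpa [succd, A] using hp)
  | L m0 k0 x y ih =>
    intro z hz hp
    simp only [exd] at hz
    simp only [succd, A] at hp
    simp only [top]
    by_cases hk : k = k0
    · simp only [hk, if_true] at hp ⊢
      by_cases hzx : z = x
      · exfalso
        simp only [hzx, if_true] at hp
        exact hp (exd_ne_nil m0 h.1 y h.2.2.1)
      · simp only [hzx, if_false] at hp
        have hb := ih h.1 z hz (by simpa [succd] using fun hh => hp (hk ▸ hh))
        rw [hk] at hb
        rw [hb]
        simp [hzx]
    · simp only [hk, if_false] at hp ⊢
      exact ih h.1 z hz hp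

lemma bottom_top (m : Fmap) (h : inv_hmap m) (k : Dim) :
    ∀ z, exd m z → bottom m k (top m k z) = bottom m k z := by
  induction m with
  | V => intro z hz; cases hz
  | I m0 x ih =>
    intro z hz
    by_cases hzx : z = x
    · simp [hzx, top, bottom]
    · rcases hz with rfl | hz
      · exact absurd rfl hzx
      have ht : top m0 k z ≠ x := fun hh =>
        h.2.2 (hh ▸ exd_top m0 h.1 k z hz)
      simp only [top, bottom, hzx, if_false, ht]
      exact ih h.1 z hz
  | L m0 k0 x y ih =>
    intro z hz
    simp only [exd] at hz
    obtain ⟨h0, hx, hy, hsx, hpy, hcxy⟩ :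
        inv_hmap m0 ∧ exd m0 x ∧ exd m0 y ∧ ¬ succd m0 k0 x ∧ ¬ predd m0 k0 y ∧
          cA m0 k0 x ≠ y := ⟨h.1, h.2.1, h.2.2.1, h.2.2.2.1, h.2.2.2.2.1, h.2.2.2.2.2⟩
    by_cases hk : k = k0
    · subst hk
      simp only [top, bottom, if_true]
      by_cases htz : top m0 k z = x
      · simp only [htz, if_true]
        have hby : bottom m0 k (top m0 k y) = bottom m0 k y := ih h0 y hy
        have hbyy : bottom m0 k y = y := nopred_bottom m0 h0 k y hy hpy
        have hbz : bottom m0 k z = bottom m0 k x := by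
          have := ih h0 z hz
          rw [htz] at this; exact this.symm
        rw [hby, hbyy, hbz]
        by_cases hbx : bottom m0 k x = y <;> simp [hbx]
      · simp only [htz, if_false]
        rw [ih h0 z hz]
    · simp only [top, bottom, hk, if_false]
      exact ih h0 z hz

lemma top_bottom (m : Fmap) (h : inv_hmap m) (k : Dim) :
    ∀ z, exd m z → top m k (bottom m k z) = top m k z := by
  induction m with
  | V => intro z hz; cases hz
  | I m0 x ih =>
    intro z hz
    by_cases hzx : z = x
    · simp [hzx, top, bottom]
    · rcases hz with rfl | hz
      · exact absurd rfl hzx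
      have ht : bottom m0 k z ≠ x := fun hh =>
        h.2.2 (hh ▸ exd_bottom m0 h.1 k z hz)
      simp only [top, bottom, hzx, if_false, ht]
      exact ih h.1 z hz
  | L m0 k0 x y ih =>
    intro z hz
    simp only [exd] at hz
    obtain ⟨h0, hx, hy, hsx, hpy, hcxy⟩ :
        inv_hmap m0 ∧ exd m0 x ∧ exd m0 y ∧ ¬ succd m0 k0 x ∧ ¬ predd m0 k0 y ∧
          cA m0 k0 x ≠ y := ⟨h.1, h.2.1, h.2.2.1, h.2.2.2.1, h.2.2.2.2.1, h.2.2.2.2.2⟩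
    by_cases hk : k = k0
    · subst hk
      simp only [top, bottom, if_true]
      by_cases hbz : bottom m0 k z = y
      · simp only [hbz, if_true]
        have htx : top m0 k (bottom m0 k x) = top m0 k x := ih h0 x hx
        have htxx : top m0 k x = x := nosucc_top m0 h0 k x hx hsx
        have htz : top m0 k z = top m0 k y := by
          have := ih h0 z hz
          rw [hbz] at this; exact this.symm
        rw [htx, htxx, htz]
        by_cases hty : top m0 k y = x <;> simp [hty]
      · simp only [hbz, if_false]
        rw [ih h0 z hz]
    · simp only [top, bottom, hk, if_false]
      exact ih h0 z hz

lemma cA_top (m : Fmap) (h : inv_hmap m) (k : Dim) :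
    ∀ z, exd m z → cA m k (top m k z) = bottom m k z := by
  induction m with
  | V => intro z hz; cases hz
  | I m0 x ih =>
    intro z hz
    by_cases hzx : z = x
    · simp [hzx, top, bottom, cA]
    · rcases hz with rfl | hz
      · exact absurd rfl hzx
      have ht : top m0 k z ≠ x := fun hh =>
        h.2.2 (hh ▸ exd_top m0 h.1 k z hz)
      simp only [top, bottom, cA, hzx, if_false, ht]
      exact ih h.1 z hz
  | L m0 k0 x y ih =>
    intro z hz
    simp only [exd] at hz
    obtain ⟨h0, hx, hy, hsx, hpy, hcxy⟩ :
        inv_hmap m0 ∧ exd m0 x ∧ exd m0 y ∧ ¬ succd m0 k0 x ∧ ¬ predd m0 k0 y ∧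
          cA m0 k0 x ≠ y := ⟨h.1, h.2.1, h.2.2.1, h.2.2.2.1, h.2.2.2.2.1, h.2.2.2.2.2⟩
    by_cases hk : k = k0
    · subst hk
      simp only [top, bottom, cA, if_true]
      by_cases htz : top m0 k z = x
      · simp only [htz, if_true]
        have htyx : top m0 k y ≠ x := by
          intro hh
          apply hcxy
          have hbx : bottom m0 k x = y := by
            have h1' := bottom_top m0 h0 k y hy
            rw [hh] at h1'
            rw [h1', nopred_bottom m0 h0 k y hy hpy]
          have hcx : cA m0 k x = bottom m0 k z := by
            have := ih h0 z hz; rw [htz] at this; exact this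
          have hbz : bottom m0 k z = bottom m0 k x := by
            have := bottom_top m0 h0 k z hz
            rw [htz] at this; exact this.symm
          rw [hcx, hbz, hbx]
        simp only [htyx, if_false, if_pos rfl]
        have hbz : bottom m0 k z = bottom m0 k x := by
          have := bottom_top m0 h0 k z hz
          rw [htz] at this; exact this.symm
        rw [hbz]
        by_cases hbx : bottom m0 k x = y <;> simp [hbx]
      · simp only [htz, if_false]
        by_cases hty : top m0 k z = top m0 k y
        · simp only [hty, if_pos rfl]
          have hbz : bottom m0 k z = y := by
            have h1' := bottom_top m0 h0 k z hz
            rw [hty] at h1'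
            rw [← h1', bottom_top m0 h0 k y hy, nopred_bottom m0 h0 k y hy hpy]
          simp [hbz]
        · simp only [hty, if_false]
          have hbz : bottom m0 k z ≠ y := by
            intro hh
            apply hty
            have := top_bottom m0 h0 k z hz
            rw [hh] at this; exact this.symm
          rw [ih h0 z hz]
          simp [hbz]
    · simp only [top, bottom, cA, hk, if_false]
      exact ih h0 z hz

lemma exd_cA_1 (m : Fmap) (h : inv_hmap m) (k : Dim) :
    ∀ z, exd m z → exd m (cA_1 m k z) := by
  induction m with
  | V => intro z hz; cases hz
  | I m0 x ih =>
    intro z hz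
    simp only [cA_1]
    by_cases hzx : z = x
    · simp [hzx, exd]
    · simp only [hzx, if_false]
      rcases hz with rfl | hz
      · exact absurd rfl hzx
      · exact Or.inr (ih h.1 z hz)
  | L m0 k0 x y ih =>
    intro z hz
    simp only [exd] at hz ⊢
    simp only [cA_1]
    by_cases hk : k = k0
    · subst hk
      simp only [if_true]
      by_cases hzy : z = y
      · simp [hzy, h.2.1]
      · simp only [hzy, if_false]
        by_cases hzb : z = bottom m0 k x
        · simp only [hzb, if_pos rfl]
          exact exd_top m0 h.1 k y h.2.2.1
        · simp only [hzb, if_false]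
          exact ih h.1 z hz
    · simp only [hk, if_false]
      exact ih h.1 z hz

lemma cA_cA_1 (m : Fmap) (h : inv_hmap m) (k : Dim) :
    ∀ z, exd m z → cA m k (cA_1 m k z) = z := by
  induction m with
  | V => intro z hz; cases hz
  | I m0 x ih =>
    intro z hz
    by_cases hzx : z = x
    · simp [hzx, cA, cA_1]
    · rcases hz with rfl | hz
      · exact absurd rfl hzx
      have hne : cA_1 m0 k z ≠ x := fun hh =>
        h.2.2 (hh ▸ exd_cA_1 m0 h.1 k z hz)
      simp only [cA, cA_1, hzx, if_false, hne]
      exact ih h.1 z hz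
  | L m0 k0 x y ih =>
    intro z hz
    simp only [exd] at hz
    obtain ⟨h0, hx, hy, hsx, hpy, hcxy⟩ :
        inv_hmap m0 ∧ exd m0 x ∧ exd m0 y ∧ ¬ succd m0 k0 x ∧ ¬ predd m0 k0 y ∧
          cA m0 k0 x ≠ y := ⟨h.1, h.2.1, h.2.2.1, h.2.2.2.1, h.2.2.2.2.1, h.2.2.2.2.2⟩
    by_cases hk : k = k0
    · subst hk
      simp only [cA, cA_1, if_true]
      by_cases hzy : z = y
      · simp [hzy]
      · simp only [hzy, if_false]
        by_cases hzb : z = bottom m0 k x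
        · simp only [hzb, if_pos rfl]
          have htyx : top m0 k y ≠ x := by
            intro hh
            apply hzy
            rw [hzb]
            have h1' := bottom_top m0 h0 k y hy
            rw [hh] at h1'
            rw [h1', nopred_bottom m0 h0 k y hy hpy]
          simp [htyx, hzb]
        · simp only [hzb, if_false]
          have h1ne : cA_1 m0 k z ≠ x := by
            intro hh
            apply hzb
            have : cA m0 k (cA_1 m0 k z) = z := ih h0 z hz
            rw [hh] at this
            rw [← this]
            have htx : top m0 k x = x := nosucc_top m0 h0 k x hx hsx
            have := cA_top m0 h0 k x hx
            rw [htx] at this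
            rw [this]
          have h2ne : cA_1 m0 k z ≠ top m0 k y := by
            intro hh
            apply hzy
            have : cA m0 k (cA_1 m0 k z) = z := ih h0 z hz
            rw [hh] at this
            rw [← this, cA_top m0 h0 k y hy, nopred_bottom m0 h0 k y hy hpy]
          simp only [h1ne, h2ne, if_false]
          exact ih h0 z hz
    · simp only [cA, cA_1, hk, if_false]
      exact ih h.1 z hz

lemma exd_cF (m : Fmap) (h : inv_hmap m) (z : Nat) (hz : exd m z) :
    exd m (cF m z) :=
  exd_cA_1 m h Dim.one _ (exd_cA_1 m h Dim.zero z hz)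

lemma cF_inj (m : Fmap) (h : inv_hmap m) {u v : Nat} (hu : exd m u) (hv : exd m v)
    (huv : cF m u = cF m v) : u = v := by
  have key : ∀ w, exd m w → cA m Dim.zero (cA m Dim.one (cF m w)) = w := by
    intro w hw
    unfold cF
    rw [cA_cA_1 m h Dim.one _ (exd_cA_1 m h Dim.zero w hw),
      cA_cA_1 m h Dim.zero w hw]
  rw [← key u hu, ← key v hv, huv]

lemma exd_cF_iter (m : Fmap) (h : inv_hmap m) (z : Nat) (hz : exd m z) :
    ∀ n, exd m ((cF m)^[n] z) := by
  intro n
  induction n with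
  | zero => exact hz
  | succ n ih =>
    rw [Function.iterate_succ_apply']
    exact exd_cF m h _ ih

/-- Darts of a map, as a list. -/
def dartList : Fmap → List Nat
  | V => []
  | I m0 x => x :: dartList m0
  | L m0 _ _ _ => dartList m0

lemma exd_mem_dartList : ∀ (m : Fmap) (z : Nat), exd m z → z ∈ dartList m := by
  intro m
  induction m with
  | V => intro z hz; cases hz
  | I m0 x ih =>
    intro z hz
    rcases hz with rfl | hz
    · simp [dartList]
    · simp [dartList]
      exact Or.inr (ih z hz)
  | L m0 k0 x y ih => intro z hz; exact ih z hz

lemma iterate_cancel (m : Fmap) (h : inv_hmap m) :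
    ∀ (i : ℕ) (u v : Nat), exd m u → exd m v →
      (cF m)^[i] u = (cF m)^[i] v → u = v := by
  intro i
  induction i with
  | zero => intro u v _ _ hh; exact hh
  | succ i ih =>
    intro u v hu hv hh
    rw [Function.iterate_succ_apply, Function.iterate_succ_apply] at hh
    exact cF_inj m h hu hv (ih _ _ (exd_cF m h u hu) (exd_cF m h v hv) hh)

lemma exists_period (m : Fmap) (h : inv_hmap m) (z : Nat) (hz : exd m z) :
    ∃ d : ℕ, 0 < d ∧ (cF m)^[d] z = z := by
  classical
  set S : Finset Nat := (dartList m).toFinset with hS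
  have hmaps : ∀ i ∈ Finset.range (S.card + 1), (cF m)^[i] z ∈ S := by
    intro i _
    simp only [hS, List.mem_toFinset]
    exact exd_mem_dartList m _ (exd_cF_iter m h z hz i)
  have hcard : S.card < (Finset.range (S.card + 1)).card := by
    simp
  obtain ⟨i, hi, j, hj, hij, heq⟩ :=
    Finset.exists_ne_map_eq_of_card_lt_of_maps_to hcard hmaps
  rcases lt_or_gt_of_ne hij with hlt | hlt
  · refine ⟨j - i, Nat.sub_pos_of_lt hlt, ?_⟩
    have : (cF m)^[i] ((cF m)^[j - i] z) = (cF m)^[i] z := by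
      rw [← Function.iterate_add_apply, Nat.add_sub_cancel' (le_of_lt hlt)]
      exact heq.symm
    exact iterate_cancel m h i _ _ (exd_cF_iter m h z hz _) hz this
  · refine ⟨i - j, Nat.sub_pos_of_lt hlt, ?_⟩
    have : (cF m)^[j] ((cF m)^[i - j] z) = (cF m)^[j] z := by
      rw [← Function.iterate_add_apply, Nat.add_sub_cancel' (le_of_lt hlt)]
      exact heq
    exact iterate_cancel m h j _ _ (exd_cF_iter m h z hz _) hz this

lemma expf_symm (m : Fmap) (h : inv_hmap m) {z t : Nat} (he : expf m z t) :
    expf m t z := by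
  obtain ⟨hz, n, hn⟩ := he
  have ht : exd m t := hn ▸ exd_cF_iter m h z hz n
  rcases Nat.eq_zero_or_pos n with rfl | hnpos
  · exact ⟨ht, 0, hn.symm⟩
  obtain ⟨d, hd, hdz⟩ := exists_period m h z hz
  refine ⟨ht, d * n - n, ?_⟩
  have hle : n ≤ d * n := Nat.le_mul_of_pos_left n hd
  have hdn : (cF m)^[d * n] z = z := by
    rw [Function.iterate_mul]
    exact Function.iterate_fixed hdz n
  calc (cF m)^[d * n - n] t = (cF m)^[d * n - n] ((cF m)^[n] z) := by rw [hn]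
    _ = (cF m)^[d * n] z := by
        rw [← Function.iterate_add_apply, Nat.sub_add_cancel hle]
    _ = z := hdn

lemma expf_trans (m : Fmap) {z t u : Nat} (h1 : expf m z t) (h2 : expf m t u) :
    expf m z u := by
  obtain ⟨hz, n, hn⟩ := h1
  obtain ⟨_, p, hp⟩ := h2
  exact ⟨hz, p + n, by rw [Function.iterate_add_apply, hn, hp]⟩

end Fmap

open Fmap
/-- With at least two ring elements, continuity and simplicity force
y and x₀ to lie in distinct faces. -/
theorem ring1_ring3_connect (m : Fmap) (x x' : Nat) (b b' : Bool)
    (l : List (Nat × Bool)) (h1 : inv_hmap m) (h2 : planar m)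
    (h3 : pre_ring1 m ((x, b) :: (x', b') :: l))
    (h4 : pre_ring3 m ((x, b) :: (x', b') :: l)) :
    ¬ expf m (A m Dim.zero x) (bottom m Dim.zero x) := by
  intro hcon
  have hadj : adjacent_faces m (x, b) (x', b') := h3.2
  have hdist : distinct_faces m (x, b) (x', b') := h4.2.2
  set y := A m Dim.zero x with hy
  set x0 := bottom m Dim.zero x with hx0
  set fd' : Nat := if b' then A m Dim.zero x' else bottom m Dim.zero x' with hfd'
  have hadj' : if b then expf m x0 fd' else expf m y fd' := by
    cases b <;> cases b' <;> simpa [adjacent_faces, fd'] using hadj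
  have hdist' : ¬ expf m (if b then y else x0) fd' := by
    cases b <;> cases b' <;> simpa [distinct_faces, faceDart, fd'] using hdist
  cases b with
  | true =>
    simp only [if_true] at hadj' hdist'
    exact hdist' (expf_trans m hcon hadj')
  | false =>
    simp only [Bool.false_eq_true, if_false] at hadj' hdist'
    exact hdist' (expf_trans m (expf_symm m h1 hcon) hadj')
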